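/- arXiv:1005.4194 — 4 statements merged into one kernel-verified Lean document; each statement's English description precedes it below -/
import Mathlib

section
/- For all 0 ≤ i < j < k ≤ r, the trinomial g_{i,j,k} lies in the 𝕂-linear span of the trinomials g_{s,s+1,s+2}, 0 ≤ s ≤ r−2; in particular g_{i,j,k} lies in the ideal ⟨g_{s,s+1,s+2}; 0 ≤ s ≤ r−2⟩ of S. -/
open MvPolynomial

section Setup

variable (𝕂 : Type) [Field 𝕂] [IsAlgClosed 𝕂] [CharZero 𝕂]
variable (r : ℕ) (a : Fin (r+1) → 𝕂 × 𝕂) (n : Fin (r+1) → ℕ)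
variable (l : ∀ i : Fin (r+1), Fin (n i) → ℕ)

/-- The index set of the variables `T_{ij}`, `0 ≤ i ≤ r`, `1 ≤ j ≤ n_i`. -/
abbrev Idx (r : ℕ) (n : Fin (r+1) → ℕ) := Σ i : Fin (r+1), Fin (n i)

/-- The monomial `T_i^{l_i} = T_{i1}^{l_{i1}} ⋯ T_{i n_i}^{l_{i n_i}}`. -/
noncomputable def mono (i : Fin (r+1)) : MvPolynomial (Idx r n) 𝕂 :=
  ∏ j : Fin (n i), (X ⟨i, j⟩ : MvPolynomial (Idx r n) 𝕂) ^ l i j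

/-- `α_{ij} = det(a_i, a_j)`. -/
def alpha (i k : Fin (r+1)) : 𝕂 := (a i).1 * (a k).2 - (a k).1 * (a i).2

/-- The trinomial `g_{i,j,k} = α_{jk} T_i^{l_i} + α_{ki} T_j^{l_j} + α_{ij} T_k^{l_k}`. -/
noncomputable def gPoly (i j k : Fin (r+1)) : MvPolynomial (Idx r n) 𝕂 :=
  C (alpha 𝕂 r a j k) * mono 𝕂 r n l i + C (alpha 𝕂 r a k i) * mono 𝕂 r n l j +
    C (alpha 𝕂 r a i j) * mono 𝕂 r n l k

/-- The ideal `⟨g_{i,i+1,i+2} ; 0 ≤ i ≤ r-2⟩`. -/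
noncomputable def relIdeal : Ideal (MvPolynomial (Idx r n) 𝕂) :=
  Ideal.span { p | ∃ i j k : Fin (r+1), (j : ℕ) = (i : ℕ) + 1 ∧ (k : ℕ) = (i : ℕ) + 2 ∧
    p = gPoly 𝕂 r a n l i j k }

/-- The ring `R(A, 𝔫, L)`. -/
abbrev RAnL := MvPolynomial (Idx r n) 𝕂 ⧸ relIdeal 𝕂 r a n l

/-- Row `i` (for `1 ≤ i ≤ r`) of the `r × n` matrix `P`. -/
def Prow (i : Fin r) : Idx r n → ℤ :=
  fun x => if x.1 = 0 then -(l x.1 x.2 : ℤ) else if x.1 = i.succ then (l x.1 x.2 : ℤ) else 0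

/-- The subgroup of `ℤ^n` generated by the rows of `P`. -/
def rowSpan : AddSubgroup (Idx r n → ℤ) := AddSubgroup.closure (Set.range (Prow r n l))

/-- The grading group `K = ℤ^n / P^*(M)`. -/
abbrev Kgrp := (Idx r n → ℤ) ⧸ rowSpan r n l

/-- The projection `Q : ℤ^n → K`. -/
noncomputable def Qmap : (Idx r n → ℤ) →+ Kgrp r n l := QuotientAddGroup.mk' (rowSpan r n l)

/-- The weight `deg T_{ij} := Q(e_{ij})` defining the `K`-grading of `S`. -/
noncomputable def wK : Idx r n → Kgrp r n l := fun x => Qmap r n l (Pi.single x (1 : ℤ))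

/-- An element of `R(A,𝔫,L)` is homogeneous of degree `d` if it is the image of a
`K`-homogeneous polynomial of degree `d`. -/
def IsHomog (d : Kgrp r n l) (y : RAnL 𝕂 r a n l) : Prop :=
  ∃ p : MvPolynomial (Idx r n) 𝕂, p.IsWeightedHomogeneous (wK r n l) d ∧
    Ideal.Quotient.mk (relIdeal 𝕂 r a n l) p = y

/-- `K`-prime elements of `R(A,𝔫,L)`. -/
def KPrime (f : RAnL 𝕂 r a n l) : Prop :=
  (∃ d, IsHomog 𝕂 r a n l d f) ∧ f ≠ 0 ∧ ¬ IsUnit f ∧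
    ∀ x y : RAnL 𝕂 r a n l, (∃ d, IsHomog 𝕂 r a n l d x) → (∃ d, IsHomog 𝕂 r a n l d y) →
      f ∣ x * y → f ∣ x ∨ f ∣ y

end Setup


section Aux1
variable (𝕂 : Type) [Field 𝕂]
variable (r : ℕ) (a : Fin (r+1) → 𝕂 × 𝕂) (n : Fin (r+1) → ℕ)
variable (l : ∀ i : Fin (r+1), Fin (n i) → ℕ)

lemma key_identity (p q i j k : Fin (r+1)) :
    C (alpha 𝕂 r a p q) * gPoly 𝕂 r a n l i j k =
      C (alpha 𝕂 r a j k) * gPoly 𝕂 r a n l p q i +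
      C (alpha 𝕂 r a k i) * gPoly 𝕂 r a n l p q j +
      C (alpha 𝕂 r a i j) * gPoly 𝕂 r a n l p q k := by
  simp only [gPoly, alpha, map_sub, map_mul]
  ring

lemma gPoly_cyc (p q i : Fin (r+1)) :
    gPoly 𝕂 r a n l p q i = gPoly 𝕂 r a n l i p q := by
  simp only [gPoly]; ring

lemma gPoly_self_left (p q : Fin (r+1)) : gPoly 𝕂 r a n l p q p = 0 := by
  simp only [gPoly, alpha, map_sub, map_mul]; ring

lemma gPoly_self_right (p q : Fin (r+1)) : gPoly 𝕂 r a n l p q q = 0 := by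
  simp only [gPoly, alpha, map_sub, map_mul]; ring

lemma alpha_ne_zero (ha : ∀ i k : Fin (r+1), i ≠ k → LinearIndependent 𝕂 ![a i, a k])
    (i k : Fin (r+1)) (h : i ≠ k) : alpha 𝕂 r a i k ≠ 0 := by
  intro h0
  have hli := (LinearIndependent.pair_iff).1 (ha i k h)
  unfold alpha at h0
  have h1 := hli (a k).2 (-(a i).2) (by
    apply Prod.ext
    · simp; linear_combination h0
    · simp; ring)
  have h2 := hli (a k).1 (-(a i).1) (by
    apply Prod.ext
    · simp; ring
    · simp; linear_combination -h0)
  have hk : a k = 0 := Prod.ext h2.1 h1.1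
  have := (hli 0 1 (by simp [hk])).2
  exact one_ne_zero this
end Aux1

section Statement1

/-- Every trinomial `g_{i,j,k}`, `0 ≤ i < j < k ≤ r`, lies in the `𝕂`-linear span of the
trinomials `g_{s,s+1,s+2}`, `0 ≤ s ≤ r-2`; in particular it lies in the ideal generated
by them. -/
theorem statement1 (𝕂 : Type) [Field 𝕂] [IsAlgClosed 𝕂] [CharZero 𝕂]
    (r : ℕ) (hr : 1 ≤ r) (a : Fin (r+1) → 𝕂 × 𝕂)
    (ha : ∀ i k : Fin (r+1), i ≠ k → LinearIndependent 𝕂 ![a i, a k])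
    (n : Fin (r+1) → ℕ) (hn : ∀ i, 0 < n i)
    (l : ∀ i : Fin (r+1), Fin (n i) → ℕ) (hl : ∀ i j, 0 < l i j)
    (i j k : Fin (r+1)) (hij : i < j) (hjk : j < k) :
    gPoly 𝕂 r a n l i j k ∈ Submodule.span 𝕂
      { p : MvPolynomial (Idx r n) 𝕂 | ∃ s t u : Fin (r+1),
        (t : ℕ) = (s : ℕ) + 1 ∧ (u : ℕ) = (s : ℕ) + 2 ∧ p = gPoly 𝕂 r a n l s t u } ∧
    gPoly 𝕂 r a n l i j k ∈ relIdeal 𝕂 r a n l := by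

  set Sset : Set (MvPolynomial (Idx r n) 𝕂) :=
    { p : MvPolynomial (Idx r n) 𝕂 | ∃ s t u : Fin (r+1),
        (t : ℕ) = (s : ℕ) + 1 ∧ (u : ℕ) = (s : ℕ) + 2 ∧ p = gPoly 𝕂 r a n l s t u }
    with hSset
  set V := Submodule.span 𝕂 Sset with hV
  have hCmem : ∀ (c : 𝕂) (x : MvPolynomial (Idx r n) 𝕂), x ∈ V → C c * x ∈ V := by
    intro c x hx
    rw [← MvPolynomial.smul_eq_C_mul]
    exact Submodule.smul_mem _ _ hx
  have main : ∀ N (i j k : Fin (r+1)), i < j → j < k → (k : ℕ) = N →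
      gPoly 𝕂 r a n l i j k ∈ V := by
    intro N
    induction N using Nat.strong_induction_on with
    | _ N IH =>
      intro i j k hij hjk hkN
      have hij' : (i : ℕ) < (j : ℕ) := hij
      have hjk' : (j : ℕ) < (k : ℕ) := hjk
      have hk2 : 2 ≤ (k : ℕ) := by omega
      have hklt : (k : ℕ) < r + 1 := k.isLt
      set p : Fin (r+1) := ⟨(k : ℕ) - 2, by omega⟩ with hp
      set q : Fin (r+1) := ⟨(k : ℕ) - 1, by omega⟩ with hq
      have hpq : p ≠ q := by
        intro h
        have := Fin.val_eq_of_eq h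
        simp [hp, hq] at this
        omega
      have hα : alpha 𝕂 r a p q ≠ 0 := alpha_ne_zero 𝕂 r a ha p q hpq
      have hg3 : gPoly 𝕂 r a n l p q k ∈ V :=
        Submodule.subset_span ⟨p, q, k, by simp [hp, hq]; omega, by simp [hp]; omega, rfl⟩
      have haux : ∀ m : Fin (r+1), (m : ℕ) < (k : ℕ) → gPoly 𝕂 r a n l p q m ∈ V := by
        intro m hm
        rcases eq_or_ne m p with h | h
        · rw [h, gPoly_self_left]; exact zero_mem _
        rcases eq_or_ne m q with h' | h'
        · rw [h', gPoly_self_right]; exact zero_mem _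
        have hmp : (m : ℕ) ≠ (p : ℕ) := fun hh => h (Fin.ext hh)
        have hmq : (m : ℕ) ≠ (q : ℕ) := fun hh => h' (Fin.ext hh)
        simp only [hp, hq] at hmp hmq
        rw [gPoly_cyc]
        exact IH ((k : ℕ) - 1) (by omega) m p q
          (show (m : ℕ) < (p : ℕ) by simp [hp]; omega)
          (show (p : ℕ) < (q : ℕ) by simp [hp, hq]; omega) rfl
      have hgi : gPoly 𝕂 r a n l p q i ∈ V := haux i (by omega)
      have hgj : gPoly 𝕂 r a n l p q j ∈ V := haux j (by omega)
      have heq : gPoly 𝕂 r a n l i j k =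
          (alpha 𝕂 r a p q)⁻¹ •
            (C (alpha 𝕂 r a j k) * gPoly 𝕂 r a n l p q i +
             C (alpha 𝕂 r a k i) * gPoly 𝕂 r a n l p q j +
             C (alpha 𝕂 r a i j) * gPoly 𝕂 r a n l p q k) := by
        rw [← key_identity, MvPolynomial.smul_eq_C_mul, ← mul_assoc, ← map_mul,
          inv_mul_cancel₀ hα, map_one, one_mul]
      rw [heq]
      exact Submodule.smul_mem _ _
        (add_mem (add_mem (hCmem _ _ hgi) (hCmem _ _ hgj)) (hCmem _ _ hg3))
  have h1 : gPoly 𝕂 r a n l i j k ∈ V := main (k : ℕ) i j k hij hjk rfl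
  refine ⟨h1, ?_⟩
  have hle : V ≤ Submodule.restrictScalars 𝕂 (relIdeal 𝕂 r a n l) :=
    Submodule.span_le.mpr (fun x hx => Ideal.subset_span hx)
  exact hle h1


end Statement1
end

section
/- The K-grading of R(A,𝔫,L) is pointed: the degree-zero homogeneous component of R(A,𝔫,L) equals 𝕂·1. -/
open MvPolynomial

section Aux

lemma rowSpan_nonneg (r : ℕ) (n : Fin (r+1) → ℕ) (hn : ∀ i, 0 < n i)
    (l : ∀ i : Fin (r+1), Fin (n i) → ℕ) (hl : ∀ i j, 0 < l i j)
    (v : Idx r n → ℤ) (hv : v ∈ rowSpan r n l) (hpos : ∀ x, 0 ≤ v x) : v = 0 := by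
  have hv' : v ∈ Submodule.span ℤ (Set.range (Prow r n l)) := by
    rw [← Submodule.mem_toAddSubgroup, Submodule.span_int_eq_addSubgroupClosure]
    exact hv
  obtain ⟨c, hc⟩ := (Submodule.mem_span_range_iff_exists_fun ℤ).mp hv'
  have hval : ∀ (i : Fin r) (j : Fin (n i.succ)),
      v ⟨i.succ, j⟩ = c i * l i.succ j := by
    intro i j
    rw [← hc, Finset.sum_apply]
    rw [Finset.sum_eq_single i]
    · have h1 : (i.succ : Fin (r+1)) ≠ 0 := Fin.succ_ne_zero i
      simp [Prow, h1]
    · intro k _ hk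
      have h1 : (i.succ : Fin (r+1)) ≠ 0 := Fin.succ_ne_zero i
      have h2 : (i.succ : Fin (r+1)) ≠ k.succ := fun h => hk (Fin.succ_injective r h).symm
      simp [Prow, h1, h2]
    · simp
  have hval0 : ∀ (j : Fin (n 0)),
      v ⟨0, j⟩ = -(∑ i, c i) * l 0 j := by
    intro j
    rw [← hc, Finset.sum_apply]
    have : ∀ k : Fin r, (c k • Prow r n l k) (⟨0, j⟩ : Idx r n) = c k * (-(l 0 j : ℤ)) := by
      intro k; simp [Prow]
    rw [Finset.sum_congr rfl fun k _ => this k, ← Finset.sum_mul]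
    ring
  have hcnn : ∀ i : Fin r, 0 ≤ c i := by
    intro i
    by_contra hlt
    push_neg at hlt
    have hj : Fin (n i.succ) := ⟨0, hn i.succ⟩
    have h1 := hpos ⟨i.succ, hj⟩
    rw [hval i hj] at h1
    have : c i * (l i.succ hj : ℤ) < 0 :=
      mul_neg_of_neg_of_pos hlt (by exact_mod_cast hl i.succ hj)
    omega
  have hsum : (∑ i, c i) ≤ 0 := by
    by_contra hlt
    push_neg at hlt
    have hj : Fin (n 0) := ⟨0, hn 0⟩
    have h1 := hpos ⟨0, hj⟩
    rw [hval0 hj] at h1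
    have : -(∑ i, c i) * (l 0 hj : ℤ) < 0 :=
      mul_neg_of_neg_of_pos (by omega) (by exact_mod_cast hl 0 hj)
    omega
  have hc0 : ∀ i : Fin r, c i = 0 := by
    intro i
    have hge : (0:ℤ) ≤ ∑ i, c i := Finset.sum_nonneg (fun i _ => hcnn i)
    have hz : (∑ i, c i) = 0 := le_antisymm hsum hge
    exact (Finset.sum_eq_zero_iff_of_nonneg (fun i _ => hcnn i)).mp hz i (Finset.mem_univ i)
  rw [← hc]
  funext x
  simp [hc0]

lemma weight_wK (r : ℕ) (n : Fin (r+1) → ℕ) (l : ∀ i : Fin (r+1), Fin (n i) → ℕ)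
    (d : Idx r n →₀ ℕ) :
    Finsupp.weight (wK r n l) d = Qmap r n l (fun x => (d x : ℤ)) := by
  rw [Finsupp.weight_apply]
  rw [Finsupp.sum]
  have : ∀ x ∈ d.support, d x • wK r n l x = Qmap r n l (d x • (Pi.single x (1:ℤ) : Idx r n → ℤ)) := by
    intro x _
    rw [wK, ← map_nsmul]
  rw [Finset.sum_congr rfl this, ← map_sum]
  congr 1
  funext y
  rw [Finset.sum_apply]
  by_cases hy : y ∈ d.support
  · rw [Finset.sum_eq_single y]
    · simp
    · intro x _ hxy
      simp [Pi.single_apply, hxy]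
    · intro h; exact absurd hy h
  · have hdy : d y = 0 := Finsupp.notMem_support_iff.mp hy
    rw [hdy, Nat.cast_zero]
    apply Finset.sum_eq_zero
    intro x hx
    have : x ≠ y := fun h => hy (h ▸ hx)
    simp [Pi.single_apply, this]

end Aux

section Statement4

/-- The `K`-grading of `R(A,𝔫,L)` is pointed: the homogeneous component of degree
`0 ∈ K` is exactly `𝕂·1`. -/
theorem statement4 (𝕂 : Type) [Field 𝕂] [IsAlgClosed 𝕂] [CharZero 𝕂]
    (r : ℕ) (hr : 1 ≤ r) (a : Fin (r+1) → 𝕂 × 𝕂)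
    (ha : ∀ i k : Fin (r+1), i ≠ k → LinearIndependent 𝕂 ![a i, a k])
    (n : Fin (r+1) → ℕ) (hn : ∀ i, 0 < n i)
    (l : ∀ i : Fin (r+1), Fin (n i) → ℕ) (hl : ∀ i j, 0 < l i j) :
    ∀ y : RAnL 𝕂 r a n l, IsHomog 𝕂 r a n l 0 y ↔
      ∃ c : 𝕂, y = algebraMap 𝕂 (RAnL 𝕂 r a n l) c := by
  intro y
  constructor
  · rintro ⟨p, hp, rfl⟩
    refine ⟨p.coeff 0, ?_⟩
    have hpC : p = C (p.coeff 0) := by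
      ext m
      rcases eq_or_ne m 0 with rfl | hm
      · simp
      · rw [coeff_C, if_neg (Ne.symm hm)]
        by_contra hc
        have h0 := hp hc
        rw [weight_wK] at h0
        have hmem : (fun x => (m x : ℤ)) ∈ rowSpan r n l := by
          rwa [Qmap, QuotientAddGroup.mk'_apply, QuotientAddGroup.eq_zero_iff] at h0
        have hz := rowSpan_nonneg r n hn l hl _ hmem (fun x => Int.natCast_nonneg _)
        apply hm
        ext x
        have := congrFun hz x
        simpa using this
    rw [hpC]
    rw [IsScalarTower.algebraMap_apply 𝕂 (MvPolynomial (Idx r n) 𝕂) (RAnL 𝕂 r a n l),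
      MvPolynomial.algebraMap_eq, Ideal.Quotient.algebraMap_eq, coeff_zero_C]
  · rintro ⟨c, rfl⟩
    refine ⟨C c, isWeightedHomogeneous_C _ _, ?_⟩
    rw [IsScalarTower.algebraMap_apply 𝕂 (MvPolynomial (Idx r n) 𝕂) (RAnL 𝕂 r a n l),
      MvPolynomial.algebraMap_eq, Ideal.Quotient.algebraMap_eq]

end Statement4
end

section
/- The abelian group K = ℤ^n/(subgroup generated by the rows of P) is torsion free if and only if the integers l_i := gcd(l_{i1}, …, l_{in_i}), i = 0, …, r, are pairwise coprime. -/
open MvPolynomial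

section AuxStatement8

variable {r : ℕ} {n : Fin (r+1) → ℕ} {l : ∀ i : Fin (r+1), Fin (n i) → ℕ}

/-- Membership in the row span as existence of coefficients. -/
lemma mem_rowSpan_iff {x : Idx r n → ℤ} :
    x ∈ rowSpan r n l ↔ ∃ c : Fin r → ℤ, ∑ i, c i • Prow r n l i = x := by
  rw [rowSpan, ← Submodule.span_int_eq_addSubgroupClosure, Submodule.mem_toAddSubgroup,
    Submodule.mem_span_range_iff_exists_fun]

/-- Value of a linear combination of rows at a coordinate. -/
lemma sum_Prow_apply (c : Fin r → ℤ) (t : Fin (r+1)) (j : Fin (n t)) :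
    (∑ i, c i • Prow r n l i) ⟨t, j⟩ =
      if h : t = 0 then -(∑ i, c i) * (l t j : ℤ) else c (t.pred h) * (l t j : ℤ) := by
  rw [Finset.sum_apply]
  simp only [Pi.smul_apply, smul_eq_mul, Prow]
  by_cases h : t = 0
  · rw [dif_pos h]
    simp only [if_pos h]
    rw [neg_mul, ← Finset.sum_mul]
    simp [Finset.sum_mul, mul_neg]
  · rw [dif_neg h]
    simp only [if_neg h]
    rw [Finset.sum_eq_single (t.pred h)]
    · rw [if_pos (Fin.succ_pred t h).symm]
    · intro i _ hi
      rw [if_neg, mul_zero]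
      intro ht
      exact hi (by subst ht; simp [Fin.pred_succ])
    · intro hmem; exact absurd (Finset.mem_univ _) hmem


/-- If `d` divides `c * f j` for every `j`, then `d` divides `c` times the gcd. -/
lemma dvd_mul_finsetGcd {ι : Type*} [DecidableEq ι] (d c : ℤ) (s : Finset ι) (f : ι → ℕ)
    (h : ∀ j ∈ s, d ∣ c * (f j : ℤ)) : d ∣ c * ((s.gcd f : ℕ) : ℤ) := by
  induction s using Finset.induction_on with
  | empty => simp
  | @insert a s' hx ih =>
    rw [Finset.gcd_insert]
    have h1 : d ∣ c * (f a : ℤ) := h a (Finset.mem_insert_self a s')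
    have h2 : d ∣ c * ((s'.gcd f : ℕ) : ℤ) := ih fun j hj => h j (Finset.mem_insert_of_mem hj)
    have hg : ((GCDMonoid.gcd (f a) (s'.gcd f) : ℕ) : ℤ) = ((Nat.gcd (f a) (s'.gcd f) : ℕ) : ℤ) := by
      norm_cast
    rw [hg, Nat.gcd_eq_gcd_ab]
    have : c * ((f a : ℤ) * Nat.gcdA (f a) (s'.gcd f) + ((s'.gcd f : ℕ) : ℤ) * Nat.gcdB (f a) (s'.gcd f))
        = (c * (f a : ℤ)) * Nat.gcdA (f a) (s'.gcd f)
          + (c * ((s'.gcd f : ℕ) : ℤ)) * Nat.gcdB (f a) (s'.gcd f) := by ring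
    rw [this]
    exact dvd_add (h1.mul_right _) (h2.mul_right _)

/-- Helper: if `p` is a prime not dividing `w`, and `p^k ∣ z * w`, then `p^k ∣ z`. -/
lemma pow_dvd_of_not_dvd {p k : ℕ} (pp : p.Prime) {w : ℕ} (hw : ¬ p ∣ w) {z : ℤ}
    (h : ((p^k : ℕ) : ℤ) ∣ z * (w : ℤ)) : ((p^k : ℕ) : ℤ) ∣ z := by
  have hcop : Nat.Coprime (p^k) w := ((pp.coprime_iff_not_dvd).mpr hw).pow_left k
  exact (Nat.isCoprime_iff_coprime.mpr hcop).dvd_of_dvd_mul_right h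

/-- The key divisibility lemma. -/
lemma key_dvd {r m : ℕ} (c : Fin r → ℤ) (L : Fin (r+1) → ℕ)
    (hcop : ∀ i i' : Fin (r+1), i ≠ i' → Nat.Coprime (L i) (L i'))
    (h1 : ∀ i : Fin r, (m:ℤ) ∣ c i * (L i.succ : ℤ))
    (h0 : (m:ℤ) ∣ (∑ i, c i) * (L 0 : ℤ)) (i : Fin r) : (m:ℤ) ∣ c i := by
  rw [Int.natCast_dvd]
  rw [Nat.dvd_iff_prime_pow_dvd_dvd]
  intro p k pp hpk
  have hpk' : ∀ z : ℤ, (m:ℤ) ∣ z → ((p^k:ℕ):ℤ) ∣ z := fun z hz =>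
    dvd_trans (Int.natCast_dvd_natCast.mpr hpk) hz
  suffices hs : ((p^k:ℕ):ℤ) ∣ c i by
    rwa [Int.natCast_dvd] at hs
  by_cases hpi : p ∣ L i.succ
  · -- p divides L i.succ, hence divides no other L
    have hother : ∀ t : Fin (r+1), t ≠ i.succ → ¬ p ∣ L t := by
      intro t ht hpt
      have := Nat.dvd_gcd hpt hpi
      rw [hcop t i.succ ht] at this
      exact pp.ne_one (Nat.dvd_one.mp this)
    have hsum : ((p^k:ℕ):ℤ) ∣ ∑ j, c j :=
      pow_dvd_of_not_dvd pp (hother 0 (Fin.succ_ne_zero i).symm) (hpk' _ h0)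
    have hj : ∀ j : Fin r, j ≠ i → ((p^k:ℕ):ℤ) ∣ c j := by
      intro j hj
      refine pow_dvd_of_not_dvd pp (hother j.succ ?_) (hpk' _ (h1 j))
      simpa [Fin.succ_inj] using hj
    have hci : c i = (∑ j, c j) - ∑ j ∈ Finset.univ.erase i, c j := by
      rw [← Finset.add_sum_erase _ _ (Finset.mem_univ i)]; ring
    rw [hci]
    exact dvd_sub hsum (Finset.dvd_sum fun j hjm => hj j (Finset.mem_erase.mp hjm).1)
  · exact pow_dvd_of_not_dvd pp hpi (hpk' _ (h1 i))


/-- If some row-span vector is divisible by `g > 1` and has a coordinate equal to a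
positive `l`-value, then the grading group has torsion. -/
lemma not_torsionFree_aux (v : Idx r n → ℤ) (hv : v ∈ rowSpan r n l) (g : ℕ) (hg1 : 1 < g)
    (hdvd : ∀ idx, (g:ℤ) ∣ v idx) (s : Fin r) (j : Fin (n s.succ))
    (hval : v ⟨s.succ, j⟩ = (l s.succ j : ℤ)) (hlpos : 0 < l s.succ j) :
    ¬ (∀ g : Kgrp r n l, g ≠ 0 → ¬IsOfFinAddOrder g) := by
  intro htf
  set x : Idx r n → ℤ := fun idx => v idx / (g:ℤ) with hx
  have hgx : (g:ℤ) • x = v := by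
    funext idx
    simp only [hx, Pi.smul_apply, smul_eq_mul]
    exact Int.mul_ediv_cancel' (hdvd idx)
  have hQx : Qmap r n l x ≠ 0 := by
    simp only [Qmap, QuotientAddGroup.mk'_apply, ne_eq, QuotientAddGroup.eq_zero_iff]
    intro hmem
    obtain ⟨c, hc⟩ := mem_rowSpan_iff.mp hmem
    have h1 := congrFun hc ⟨s.succ, j⟩
    rw [sum_Prow_apply, dif_neg (Fin.succ_ne_zero s), Fin.pred_succ] at h1
    have h2 : x ⟨s.succ, j⟩ = (l s.succ j : ℤ) / (g:ℤ) := by rw [hx]; simp [hval]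
    rw [h2] at h1
    have hgl : (g:ℤ) ∣ (l s.succ j : ℤ) := by rw [← hval]; exact hdvd _
    have h3 : c s * (l s.succ j : ℤ) * (g:ℤ) = (l s.succ j : ℤ) := by
      rw [h1, Int.ediv_mul_cancel hgl]
    have hlne : (l s.succ j : ℤ) ≠ 0 := by positivity
    have h4 : (l s.succ j : ℤ) * (c s * (g:ℤ)) = (l s.succ j : ℤ) * 1 := by
      linear_combination h3
    have h5 : c s * (g:ℤ) = 1 := mul_left_cancel₀ hlne h4
    have h6 : (g:ℤ) ∣ 1 := Dvd.intro_left _ h5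
    have h7 : g ∣ 1 := by
      rwa [show (1:ℤ) = ((1:ℕ):ℤ) by norm_num, Int.natCast_dvd_natCast] at h6
    exact absurd (Nat.le_of_dvd one_pos h7) (by omega)
  have horder : IsOfFinAddOrder (Qmap r n l x) := by
    rw [isOfFinAddOrder_iff_nsmul_eq_zero]
    refine ⟨g, by omega, ?_⟩
    rw [← map_nsmul]
    have : g • x = (g:ℤ) • x := (natCast_zsmul x g).symm
    rw [this, hgx, Qmap, QuotientAddGroup.mk'_apply, QuotientAddGroup.eq_zero_iff]
    exact hv
  exact htf _ hQx horder

end AuxStatement8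

section Statement8

/-- `K = ℤ^n / (row span of P)` is torsion free if and only if the integers
`l_i = gcd(l_{i1}, …, l_{i n_i})`, `i = 0, …, r`, are pairwise coprime. -/
theorem statement8 (r : ℕ) (hr : 1 ≤ r)
    (n : Fin (r+1) → ℕ) (hn : ∀ i, 0 < n i)
    (l : ∀ i : Fin (r+1), Fin (n i) → ℕ) (hl : ∀ i j, 0 < l i j) :
    (∀ g : Kgrp r n l, g ≠ 0 → ¬IsOfFinAddOrder g) ↔
      ∀ i i' : Fin (r+1), i ≠ i' →
        Nat.Coprime (Finset.univ.gcd fun j : Fin (n i) => l i j)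
          (Finset.univ.gcd fun j : Fin (n i') => l i' j) := by
  have hLdvd : ∀ (t : Fin (r+1)) (j : Fin (n t)),
      (Finset.univ.gcd fun j : Fin (n t) => l t j) ∣ l t j := fun t j =>
    Finset.gcd_dvd (Finset.mem_univ j)
  have hLpos : ∀ t, (Finset.univ.gcd fun j : Fin (n t) => l t j) ≠ 0 := by
    intro t h0
    have := (Finset.gcd_eq_zero_iff.mp h0) ⟨0, hn t⟩ (Finset.mem_univ _)
    have := hl t ⟨0, hn t⟩; omega
  constructor
  · -- torsion-free → coprime
    intro htf i i' hne
    by_contra hnc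
    set L : ∀ t : Fin (r+1), ℕ := fun t => Finset.univ.gcd fun j : Fin (n t) => l t j with hL
    set g : ℕ := Nat.gcd (L i) (L i') with hg
    have hgLi : g ∣ L i := Nat.gcd_dvd_left _ _
    have hgLi' : g ∣ L i' := Nat.gcd_dvd_right _ _
    have hg0 : g ≠ 0 := fun h => hLpos i (Nat.eq_zero_of_gcd_eq_zero_left h)
    have hnc' : g ≠ 1 := fun h => hnc h
    have hg1 : 1 < g := by omega
    have hgl : ∀ (u : Fin (r+1)), (u = i ∨ u = i') → ∀ j : Fin (n u), (g:ℤ) ∣ (l u j : ℤ) := by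
      rintro u (rfl | rfl) j
      · exact Int.natCast_dvd_natCast.mpr (hgLi.trans (hLdvd _ j))
      · exact Int.natCast_dvd_natCast.mpr (hgLi'.trans (hLdvd _ j))
    by_cases hi : i = 0
    · -- i = 0, so i' ≠ 0
      have hi' : i' ≠ 0 := fun h => hne (hi.trans h.symm)
      have hts : (i'.pred hi').succ = i' := Fin.succ_pred i' hi'
      refine not_torsionFree_aux (Prow r n l (i'.pred hi'))
        (AddSubgroup.subset_closure ⟨_, rfl⟩) g hg1 ?_ (i'.pred hi')
        ⟨0, hn _⟩ ?_ (hl _ _) htf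
      · rintro ⟨u, j⟩
        show (g:ℤ) ∣ (if u = 0 then -(l u j : ℤ) else
          if u = (i'.pred hi').succ then (l u j : ℤ) else 0)
        split_ifs with h1 h2
        · exact (dvd_neg).mpr (hgl u (Or.inl (h1.trans hi.symm)) j)
        · exact hgl u (Or.inr (h2.trans hts)) j
        · exact dvd_zero _
      · show (if (i'.pred hi').succ = 0 then -(l _ _ : ℤ) else
          if (i'.pred hi').succ = (i'.pred hi').succ then (l _ _ : ℤ) else 0) = _
        rw [if_neg (Fin.succ_ne_zero _), if_pos rfl]
    · by_cases hi' : i' = 0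
      · have hss : (i.pred hi).succ = i := Fin.succ_pred i hi
        refine not_torsionFree_aux (Prow r n l (i.pred hi))
          (AddSubgroup.subset_closure ⟨_, rfl⟩) g hg1 ?_ (i.pred hi)
          ⟨0, hn _⟩ ?_ (hl _ _) htf
        · rintro ⟨u, j⟩
          show (g:ℤ) ∣ (if u = 0 then -(l u j : ℤ) else
            if u = (i.pred hi).succ then (l u j : ℤ) else 0)
          split_ifs with h1 h2
          · exact (dvd_neg).mpr (hgl u (Or.inr (h1.trans hi'.symm)) j)
          · exact hgl u (Or.inl (h2.trans hss)) j
          · exact dvd_zero _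
        · show (if (i.pred hi).succ = 0 then -(l _ _ : ℤ) else
            if (i.pred hi).succ = (i.pred hi).succ then (l _ _ : ℤ) else 0) = _
          rw [if_neg (Fin.succ_ne_zero _), if_pos rfl]
      · -- both nonzero
        have hss : (i.pred hi).succ = i := Fin.succ_pred i hi
        have hts : (i'.pred hi').succ = i' := Fin.succ_pred i' hi'
        have hst : (i.pred hi).succ ≠ (i'.pred hi').succ := by
          rw [hss, hts]; exact hne
        refine not_torsionFree_aux (Prow r n l (i.pred hi) - Prow r n l (i'.pred hi'))
          (sub_mem (AddSubgroup.subset_closure ⟨_, rfl⟩)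
            (AddSubgroup.subset_closure ⟨_, rfl⟩)) g hg1 ?_ (i.pred hi)
          ⟨0, hn _⟩ ?_ (hl _ _) htf
        · rintro ⟨u, j⟩
          show (g:ℤ) ∣ ((if u = 0 then -(l u j : ℤ) else
              if u = (i.pred hi).succ then (l u j : ℤ) else 0) -
            (if u = 0 then -(l u j : ℤ) else
              if u = (i'.pred hi').succ then (l u j : ℤ) else 0))
          split_ifs with h1 h2 h3 h3
          · simp
          · simp
          · rw [sub_zero]; exact hgl u (Or.inl (h2.trans hss)) j
          · rw [zero_sub, dvd_neg]; exact hgl u (Or.inr (h3.trans hts)) j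
          · simp
        · show ((if (i.pred hi).succ = 0 then -(l _ _ : ℤ) else
              if (i.pred hi).succ = (i.pred hi).succ then (l _ _ : ℤ) else 0) -
            (if (i.pred hi).succ = 0 then -(l _ _ : ℤ) else
              if (i.pred hi).succ = (i'.pred hi').succ then (l _ _ : ℤ) else 0)) = _
          rw [if_neg (Fin.succ_ne_zero _), if_pos rfl, if_neg (Fin.succ_ne_zero _),
            if_neg hst, sub_zero]
  · -- coprime → torsion-free
    intro hcop gk hgk hford
    obtain ⟨x, rfl⟩ := QuotientAddGroup.mk'_surjective (rowSpan r n l) gk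
    obtain ⟨m, hm, hmx⟩ := isOfFinAddOrder_iff_nsmul_eq_zero.mp hford
    rw [← map_nsmul] at hmx
    have hmem : m • x ∈ rowSpan r n l := by
      rwa [QuotientAddGroup.mk'_apply, QuotientAddGroup.eq_zero_iff] at hmx
    obtain ⟨c, hc⟩ := mem_rowSpan_iff.mp hmem
    have hval : ∀ (t : Fin (r+1)) (j : Fin (n t)),
        (∑ i, c i • Prow r n l i) ⟨t, j⟩ = (m:ℤ) * x ⟨t, j⟩ := by
      intro t j; rw [hc]; simp [Pi.smul_apply]
    have h1 : ∀ i : Fin r, (m:ℤ) ∣ c i *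
        ((Finset.univ.gcd fun j : Fin (n i.succ) => l i.succ j : ℕ) : ℤ) := by
      intro i
      apply dvd_mul_finsetGcd
      intro j _
      have h := hval i.succ j
      rw [sum_Prow_apply, dif_neg (Fin.succ_ne_zero i), Fin.pred_succ] at h
      exact ⟨x ⟨i.succ, j⟩, h⟩
    have h0 : (m:ℤ) ∣ (∑ i, c i) *
        ((Finset.univ.gcd fun j : Fin (n 0) => l 0 j : ℕ) : ℤ) := by
      apply dvd_mul_finsetGcd
      intro j _
      have h := hval 0 j
      rw [sum_Prow_apply, dif_pos rfl] at h
      refine ⟨-(x ⟨0, j⟩), ?_⟩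
      rw [mul_neg, ← h]; ring
    have hdvd : ∀ i, (m:ℤ) ∣ c i :=
      key_dvd c (fun t => Finset.univ.gcd fun j : Fin (n t) => l t j) hcop h1 h0
    apply hgk
    rw [QuotientAddGroup.mk'_apply, QuotientAddGroup.eq_zero_iff, mem_rowSpan_iff]
    refine ⟨fun i => c i / (m:ℤ), ?_⟩
    apply smul_right_injective (Idx r n → ℤ) (show (m:ℤ) ≠ 0 from Int.natCast_ne_zero.mpr hm.ne')
    show (m:ℤ) • (∑ i : Fin r, (c i / (m:ℤ)) • Prow r n l i) = (m:ℤ) • x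
    rw [Finset.smul_sum]
    have hcongr : ∀ i ∈ Finset.univ, (m:ℤ) • ((c i / (m:ℤ)) • Prow r n l i)
        = c i • Prow r n l i := by
      intro i _
      rw [smul_smul, Int.mul_ediv_cancel' (hdvd i)]
    rw [Finset.sum_congr rfl hcongr, hc, natCast_zsmul]

end Statement8
end

section
/- If R(A,𝔫,L) is a unique factorization domain and n_i·l_{ij} > 1 holds for a given pair (i,j), then the class of T_{ij} is a prime element of R(A,𝔫,L). -/
open MvPolynomial

namespace S11Aux


variable {σ : Type} {R : Type} [CommRing R]

lemma weight_single_one (w : σ → ℕ) (x : σ) :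
    (Finsupp.weight w) (Finsupp.single x 1) = w x := by
  simp [Finsupp.weight_apply, Finsupp.sum_single_index]

lemma wHC_mul (w : σ → ℕ) (p q : MvPolynomial σ R) (d : ℕ) :
    weightedHomogeneousComponent w d (p * q) =
      ∑ z ∈ Finset.HasAntidiagonal.antidiagonal d,
        weightedHomogeneousComponent w z.1 p * weightedHomogeneousComponent w z.2 q := by
  classical
  ext m
  rw [coeff_weightedHomogeneousComponent, coeff_sum]
  simp only [coeff_mul, coeff_weightedHomogeneousComponent]
  rw [Finset.sum_comm]
  have step : ∀ uv ∈ Finset.HasAntidiagonal.antidiagonal m,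
      (∑ z ∈ Finset.HasAntidiagonal.antidiagonal d,
        (if (Finsupp.weight w) uv.1 = z.1 then coeff uv.1 p else 0) *
        (if (Finsupp.weight w) uv.2 = z.2 then coeff uv.2 q else 0))
      = if (Finsupp.weight w) m = d then coeff uv.1 p * coeff uv.2 q else 0 := by
    rintro ⟨m1, m2⟩ huv
    rw [Finset.HasAntidiagonal.mem_antidiagonal] at huv
    by_cases h : (Finsupp.weight w) m = d
    · rw [if_pos h]
      rw [Finset.sum_eq_single ((Finsupp.weight w) m1, (Finsupp.weight w) m2)]
      · simp
      · rintro ⟨z1, z2⟩ hz hne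
        by_cases h1 : (Finsupp.weight w) m1 = z1
        · have h2 : (Finsupp.weight w) m2 ≠ z2 := fun h2 => hne (by rw [← h1, ← h2])
          simp only [if_neg h2, mul_zero]
        · simp only [if_neg h1, zero_mul]
      · intro hmem
        exfalso; apply hmem
        rw [Finset.HasAntidiagonal.mem_antidiagonal]
        show (Finsupp.weight w) m1 + (Finsupp.weight w) m2 = d
        rw [← map_add, huv, h]
    · rw [if_neg h]
      apply Finset.sum_eq_zero
      rintro ⟨z1, z2⟩ hz
      rw [Finset.HasAntidiagonal.mem_antidiagonal] at hz
      by_cases h1 : (Finsupp.weight w) m1 = z1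
      · by_cases h2 : (Finsupp.weight w) m2 = z2
        · exfalso; apply h
          rw [← huv, map_add, h1, h2, hz]
        · simp only [if_neg h2, mul_zero]
      · simp only [if_neg h1, zero_mul]
  rw [Finset.sum_congr rfl step]
  split_ifs with h
  · rfl
  · rw [Finset.sum_const_zero]

lemma sum_wHC_image (w : σ → ℕ) (p : MvPolynomial σ R) :
    ∑ d ∈ p.support.image ⇑(Finsupp.weight w), weightedHomogeneousComponent w d p = p := by
  classical
  ext m
  rw [coeff_sum]
  simp only [coeff_weightedHomogeneousComponent]
  rw [Finset.sum_ite_eq (p.support.image ⇑(Finsupp.weight w)) ((Finsupp.weight w) m)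
      (fun _ => coeff m p)]
  split_ifs with h
  · rfl
  · symm
    by_contra hc
    exact h (Finset.mem_image_of_mem _ (mem_support_iff.mpr hc))

lemma mem_image_of_wHC_ne_zero {w : σ → ℕ} {p : MvPolynomial σ R} {d : ℕ}
    (h : weightedHomogeneousComponent w d p ≠ 0) :
    d ∈ p.support.image ⇑(Finsupp.weight w) := by
  classical
  by_contra hd
  apply h
  apply weightedHomogeneousComponent_eq_zero'
  intro m hm
  exact fun he => hd (he ▸ Finset.mem_image_of_mem _ hm)

lemma prime_X' [IsDomain R] (x : σ) : Prime (X x : MvPolynomial σ R) := by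
  classical
  let e := (renameEquiv R (Equiv.optionSubtypeNe x).symm).trans
    (optionEquivLeft R {b : σ // b ≠ x})
  rw [← MulEquiv.prime_iff e.toMulEquiv]
  have he : e (X x) = Polynomial.X := by
    show (optionEquivLeft R _) ((renameEquiv R (Equiv.optionSubtypeNe x).symm) (X x)) = _
    rw [renameEquiv_apply, rename_X, Equiv.optionSubtypeNe_symm_self, optionEquivLeft_X_none]
  rw [show e.toMulEquiv (X x) = e (X x) from rfl, he]
  exact Polynomial.prime_X


theorem irred_aux {𝕂 : Type} [Field 𝕂] {σ : Type} (w : σ → ℕ) (c : ℕ)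
    (I : Ideal (MvPolynomial σ 𝕂)) (hdom : IsDomain (MvPolynomial σ 𝕂 ⧸ I))
    (hIcomp : ∀ p ∈ I, ∀ d : ℕ, weightedHomogeneousComponent w d p ∈ I)
    (hIsupp : ∀ p ∈ I, ∀ m ∈ p.support, c ≤ (Finsupp.weight w) m)
    (x : σ) (hlt : w x < c) :
    Ideal.Quotient.mk I (X x) ≠ 0 ∧ Irreducible (Ideal.Quotient.mk I (X x)) := by
  classical
  haveI := hdom
  have hXnotmem : (X x : MvPolynomial σ 𝕂) ∉ I := by
    intro hmem
    have h1 := hIsupp _ hmem (Finsupp.single x 1)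
      (by rw [support_X]; exact Finset.mem_singleton_self _)
    rw [weight_single_one] at h1
    omega
  have hX0 : Ideal.Quotient.mk I (X x) ≠ 0 := by
    rw [Ne, Ideal.Quotient.eq_zero_iff_mem]; exact hXnotmem
  have hXnu : ¬ IsUnit (Ideal.Quotient.mk I (X x)) := by
    intro hu
    obtain ⟨b, hb⟩ := isUnit_iff_exists_inv.mp hu
    obtain ⟨h, rfl⟩ := Ideal.Quotient.mk_surjective b
    have hmem : (X x * h - 1 : MvPolynomial σ 𝕂) ∈ I := by
      rw [← Ideal.Quotient.eq_zero_iff_mem, map_sub, map_mul, map_one, hb, sub_self]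
    have h0 : (0 : σ →₀ ℕ) ∈ (X x * h - 1 : MvPolynomial σ 𝕂).support := by
      rw [mem_support_iff]
      have hcc : constantCoeff (X x * h - 1 : MvPolynomial σ 𝕂) = -1 := by
        rw [map_sub, map_mul, constantCoeff_X, zero_mul, map_one, zero_sub]
      rw [constantCoeff_eq] at hcc
      rw [hcc]
      simp
    have h1 := hIsupp _ hmem 0 h0
    rw [map_zero] at h1
    omega
  refine ⟨hX0, hXnu, ?_⟩
  rintro A B hAB
  obtain ⟨u, rfl⟩ := Ideal.Quotient.mk_surjective A
  obtain ⟨v, rfl⟩ := Ideal.Quotient.mk_surjective B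
  have hXuv : (X x : MvPolynomial σ 𝕂) - u * v ∈ I := by
    rw [← Ideal.Quotient.eq_zero_iff_mem, map_sub, map_mul, ← hAB, sub_self]
  have huI : u ∉ I := fun hh => hX0 (by
    rw [hAB, Ideal.Quotient.eq_zero_iff_mem.mpr hh, zero_mul])
  have hvI : v ∉ I := fun hh => hX0 (by
    rw [hAB, Ideal.Quotient.eq_zero_iff_mem.mpr hh, mul_zero])
  set Wu := u.support.image ⇑(Finsupp.weight w) with hWu
  set Wv := v.support.image ⇑(Finsupp.weight w) with hWv
  set Du := Wu.filter (fun d => weightedHomogeneousComponent w d u ∉ I) with hDu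
  set Dv := Wv.filter (fun d => weightedHomogeneousComponent w d v ∉ I) with hDv
  have hnotDu : ∀ d, d ∉ Du → weightedHomogeneousComponent w d u ∈ I := by
    intro d hd
    by_contra hcon
    exact hd (Finset.mem_filter.mpr
      ⟨mem_image_of_wHC_ne_zero (fun h0' => hcon (h0' ▸ I.zero_mem)), hcon⟩)
  have hnotDv : ∀ d, d ∉ Dv → weightedHomogeneousComponent w d v ∈ I := by
    intro d hd
    by_contra hcon
    exact hd (Finset.mem_filter.mpr
      ⟨mem_image_of_wHC_ne_zero (fun h0' => hcon (h0' ▸ I.zero_mem)), hcon⟩)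
  have hDune : Du.Nonempty := by
    rw [Finset.nonempty_iff_ne_empty]
    intro hemp
    apply huI
    rw [← sum_wHC_image w u]
    exact Submodule.sum_mem _ (fun d _ => hnotDu d (by rw [hemp]; exact Finset.notMem_empty d))
  have hDvne : Dv.Nonempty := by
    rw [Finset.nonempty_iff_ne_empty]
    intro hemp
    apply hvI
    rw [← sum_wHC_image w v]
    exact Submodule.sum_mem _ (fun d _ => hnotDv d (by rw [hemp]; exact Finset.notMem_empty d))
  set d1 := Du.min' hDune with hd1def
  set d2 := Du.max' hDune with hd2def
  set e1 := Dv.min' hDvne with he1def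
  set e2 := Dv.max' hDvne with he2def
  have hd1 : weightedHomogeneousComponent w d1 u ∉ I :=
    (Finset.mem_filter.mp (Du.min'_mem hDune)).2
  have hd2 : weightedHomogeneousComponent w d2 u ∉ I :=
    (Finset.mem_filter.mp (Du.max'_mem hDune)).2
  have he1 : weightedHomogeneousComponent w e1 v ∉ I :=
    (Finset.mem_filter.mp (Dv.min'_mem hDvne)).2
  have he2 : weightedHomogeneousComponent w e2 v ∉ I :=
    (Finset.mem_filter.mp (Dv.max'_mem hDvne)).2
  have hprodnot : ∀ dz ez : ℕ, weightedHomogeneousComponent w dz u ∉ I →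
      weightedHomogeneousComponent w ez v ∉ I →
      weightedHomogeneousComponent w dz u * weightedHomogeneousComponent w ez v ∉ I := by
    intro dz ez h1 h2 hmem
    rw [← Ideal.Quotient.eq_zero_iff_mem, map_mul] at hmem
    rcases mul_eq_zero.mp hmem with hh | hh
    · exact h1 (Ideal.Quotient.eq_zero_iff_mem.mp hh)
    · exact h2 (Ideal.Quotient.eq_zero_iff_mem.mp hh)
  have key2 : ∀ dz ez : ℕ,
      (∀ z ∈ Finset.HasAntidiagonal.antidiagonal (dz + ez), z ≠ (dz, ez) →
        weightedHomogeneousComponent w z.1 u * weightedHomogeneousComponent w z.2 v ∈ I) →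
      weightedHomogeneousComponent w (dz + ez) (u * v) -
        weightedHomogeneousComponent w dz u * weightedHomogeneousComponent w ez v ∈ I := by
    intro dz ez hz
    rw [wHC_mul]
    have hmem : ((dz, ez) : ℕ × ℕ) ∈ Finset.HasAntidiagonal.antidiagonal (dz + ez) :=
      Finset.HasAntidiagonal.mem_antidiagonal.mpr rfl
    rw [← Finset.add_sum_erase _ _ hmem, add_sub_cancel_left]
    exact Submodule.sum_mem _ (fun z hzmem =>
      hz z (Finset.mem_of_mem_erase hzmem) (Finset.ne_of_mem_erase hzmem))
  have hA : ∀ dd : ℕ, dd ≠ w x → weightedHomogeneousComponent w dd (u * v) ∈ I := by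
    intro dd hdd
    have h1 := hIcomp _ hXuv dd
    rw [map_sub, (isWeightedHomogeneous_X 𝕂 w x).weightedHomogeneousComponent_ne dd hdd,
      zero_sub] at h1
    exact (neg_mem_iff).mp h1
  have hA' : (X x : MvPolynomial σ 𝕂) - weightedHomogeneousComponent w (w x) (u * v) ∈ I := by
    have h1 := hIcomp _ hXuv (w x)
    rwa [map_sub, (isWeightedHomogeneous_X 𝕂 w x).weightedHomogeneousComponent_same] at h1
  have hmins : d1 + e1 = w x := by
    by_contra hne
    have hzI : ∀ z ∈ Finset.HasAntidiagonal.antidiagonal (d1 + e1), z ≠ (d1, e1) →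
        weightedHomogeneousComponent w z.1 u * weightedHomogeneousComponent w z.2 v ∈ I := by
      rintro ⟨z1, z2⟩ hz hzne
      rw [Finset.HasAntidiagonal.mem_antidiagonal] at hz
      by_cases hz1 : weightedHomogeneousComponent w z1 u ∈ I
      · exact Ideal.mul_mem_right _ _ hz1
      · have hz1Du : z1 ∈ Du := by
          by_contra hh; exact hz1 (hnotDu _ hh)
        have hle : d1 ≤ z1 := Du.min'_le _ hz1Du
        have hz1gt : d1 < z1 := by
          rcases lt_or_eq_of_le hle with hlt' | heq
          · exact hlt'
          · exfalso; apply hzne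
            simp only [Prod.mk.injEq]
            omega
        have hz2lt : z2 < e1 := by omega
        have hz2 : z2 ∉ Dv := fun hmem2 => by
          have := Dv.min'_le _ hmem2; omega
        exact Ideal.mul_mem_left _ _ (hnotDv _ hz2)
    have hdiff := key2 d1 e1 hzI
    have h2 := hA (d1 + e1) hne
    have hmem : weightedHomogeneousComponent w d1 u * weightedHomogeneousComponent w e1 v ∈ I := by
      have h3 := Submodule.sub_mem _ h2 hdiff
      rwa [sub_sub_cancel] at h3
    exact hprodnot d1 e1 hd1 he1 hmem
  have hmaxs : d2 + e2 = w x := by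
    by_contra hne
    have hzI : ∀ z ∈ Finset.HasAntidiagonal.antidiagonal (d2 + e2), z ≠ (d2, e2) →
        weightedHomogeneousComponent w z.1 u * weightedHomogeneousComponent w z.2 v ∈ I := by
      rintro ⟨z1, z2⟩ hz hzne
      rw [Finset.HasAntidiagonal.mem_antidiagonal] at hz
      by_cases hz1 : weightedHomogeneousComponent w z1 u ∈ I
      · exact Ideal.mul_mem_right _ _ hz1
      · have hz1Du : z1 ∈ Du := by
          by_contra hh; exact hz1 (hnotDu _ hh)
        have hle : z1 ≤ d2 := Du.le_max' _ hz1Du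
        have hz1lt : z1 < d2 := by
          rcases lt_or_eq_of_le hle with hlt' | heq
          · exact hlt'
          · exfalso; apply hzne
            simp only [Prod.mk.injEq]
            omega
        have hz2gt : e2 < z2 := by omega
        have hz2 : z2 ∉ Dv := fun hmem2 => by
          have := Dv.le_max' _ hmem2; omega
        exact Ideal.mul_mem_left _ _ (hnotDv _ hz2)
    have hdiff := key2 d2 e2 hzI
    have h2 := hA (d2 + e2) hne
    have hmem : weightedHomogeneousComponent w d2 u * weightedHomogeneousComponent w e2 v ∈ I := by
      have h3 := Submodule.sub_mem _ h2 hdiff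
      rwa [sub_sub_cancel] at h3
    exact hprodnot d2 e2 hd2 he2 hmem
  have hd1le : d1 ≤ d2 := Du.min'_le _ (Du.max'_mem hDune)
  have he1le : e1 ≤ e2 := Dv.min'_le _ (Dv.max'_mem hDvne)
  have hd12 : d1 = d2 := by omega
  have hDusing : ∀ d ∈ Du, d = d1 := fun d hd => by
    have h1 := Du.min'_le _ hd
    have h2 := Du.le_max' _ hd
    omega
  have hDvsing : ∀ d ∈ Dv, d = e1 := fun d hd => by
    have h1 := Dv.min'_le _ hd
    have h2 := Dv.le_max' _ hd
    omega
  have hzI2 : ∀ z ∈ Finset.HasAntidiagonal.antidiagonal (d1 + e1), z ≠ (d1, e1) →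
      weightedHomogeneousComponent w z.1 u * weightedHomogeneousComponent w z.2 v ∈ I := by
    rintro ⟨z1, z2⟩ hz hzne
    rw [Finset.HasAntidiagonal.mem_antidiagonal] at hz
    by_cases hz1 : z1 = d1
    · exfalso; apply hzne
      simp only [Prod.mk.injEq]
      omega
    · have hz1' : z1 ∉ Du := fun hmem => hz1 (hDusing _ hmem)
      exact Ideal.mul_mem_right _ _ (hnotDu _ hz1')
  have hdiff := key2 d1 e1 hzI2
  rw [hmins] at hdiff
  have hXfac : (X x : MvPolynomial σ 𝕂) -
      weightedHomogeneousComponent w d1 u * weightedHomogeneousComponent w e1 v ∈ I := by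
    have h3 := Submodule.add_mem _ hA' hdiff
    rwa [sub_add_sub_cancel] at h3
  have hhom : IsWeightedHomogeneous w ((X x : MvPolynomial σ 𝕂) -
      weightedHomogeneousComponent w d1 u * weightedHomogeneousComponent w e1 v) (w x) := by
    have h1 : IsWeightedHomogeneous w
        (weightedHomogeneousComponent w d1 u * weightedHomogeneousComponent w e1 v) (w x) := by
      have h2 := (weightedHomogeneousComponent_isWeightedHomogeneous (w := w) d1 u).mul
        (weightedHomogeneousComponent_isWeightedHomogeneous e1 v)
      rwa [hmins] at h2
    exact Submodule.sub_mem (weightedHomogeneousSubmodule 𝕂 w (w x))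
      (isWeightedHomogeneous_X 𝕂 w x) h1
  have hzero : (X x : MvPolynomial σ 𝕂) -
      weightedHomogeneousComponent w d1 u * weightedHomogeneousComponent w e1 v = 0 := by
    by_contra hne0
    obtain ⟨m, hm⟩ := Finset.nonempty_of_ne_empty (fun hh => hne0 (support_eq_empty.mp hh))
    have hge := hIsupp _ hXfac m hm
    have heq := hhom (mem_support_iff.mp hm)
    omega
  have hXeq : (X x : MvPolynomial σ 𝕂) =
      weightedHomogeneousComponent w d1 u * weightedHomogeneousComponent w e1 v :=
    sub_eq_zero.mp hzero
  rcases (prime_X' (R := 𝕂) x).irreducible.isUnit_or_isUnit hXeq with hun | hun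
  · left
    have humk : Ideal.Quotient.mk I u = Ideal.Quotient.mk I (weightedHomogeneousComponent w d1 u) := by
      rw [Ideal.Quotient.mk_eq_mk_iff_sub_mem]
      have hd1W : d1 ∈ Wu := (Finset.mem_filter.mp (Du.min'_mem hDune)).1
      have hsplit : (∑ d ∈ Wu, weightedHomogeneousComponent w d u) -
          weightedHomogeneousComponent w d1 u =
          ∑ d ∈ Wu.erase d1, weightedHomogeneousComponent w d u := by
        rw [← Finset.add_sum_erase _ _ hd1W, add_sub_cancel_left]
      have heq1 : u - weightedHomogeneousComponent w d1 u
          = ∑ d ∈ Wu.erase d1, weightedHomogeneousComponent w d u := by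
        nth_rewrite 1 [← sum_wHC_image w u]
        exact hsplit
      rw [heq1]
      exact Submodule.sum_mem _ (fun d hd =>
        hnotDu d (fun hmem => (Finset.ne_of_mem_erase hd) (hDusing _ hmem)))
    rw [humk]
    exact hun.map (Ideal.Quotient.mk I)
  · right
    have hvmk : Ideal.Quotient.mk I v = Ideal.Quotient.mk I (weightedHomogeneousComponent w e1 v) := by
      rw [Ideal.Quotient.mk_eq_mk_iff_sub_mem]
      have he1W : e1 ∈ Wv := (Finset.mem_filter.mp (Dv.min'_mem hDvne)).1
      have hsplit : (∑ d ∈ Wv, weightedHomogeneousComponent w d v) -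
          weightedHomogeneousComponent w e1 v =
          ∑ d ∈ Wv.erase e1, weightedHomogeneousComponent w d v := by
        rw [← Finset.add_sum_erase _ _ he1W, add_sub_cancel_left]
      have heq1 : v - weightedHomogeneousComponent w e1 v
          = ∑ d ∈ Wv.erase e1, weightedHomogeneousComponent w d v := by
        nth_rewrite 1 [← sum_wHC_image w v]
        exact hsplit
      rw [heq1]
      exact Submodule.sum_mem _ (fun d hd =>
        hnotDv d (fun hmem => (Finset.ne_of_mem_erase hd) (hDvsing _ hmem)))
    rw [hvmk]
    exact hun.map (Ideal.Quotient.mk I)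


end S11Aux

namespace S11Aux

section App
variable (𝕂 : Type) [Field 𝕂] [IsAlgClosed 𝕂] [CharZero 𝕂]
variable (r : ℕ) (a : Fin (r+1) → 𝕂 × 𝕂) (n : Fin (r+1) → ℕ)
variable (l : ∀ i : Fin (r+1), Fin (n i) → ℕ)

/-- The common weighted degree of the relations. -/
noncomputable def cc : ℕ := ∏ y : Idx r n, (n y.1 * l y.1 y.2)

/-- The weights making all relations homogeneous. -/
noncomputable def ww : Idx r n → ℕ := fun y => cc r n l / (n y.1 * l y.1 y.2)

lemma cc_dvd (y : Idx r n) : (n y.1 * l y.1 y.2) ∣ cc r n l :=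
  Finset.dvd_prod_of_mem _ (Finset.mem_univ y)

lemma cc_pos (hn : ∀ i, 0 < n i) (hl : ∀ i j, 0 < l i j) : 0 < cc r n l :=
  Finset.prod_pos (fun y _ => Nat.mul_pos (hn y.1) (hl y.1 y.2))

lemma ww_mul (y : Idx r n) : ww r n l y * (n y.1 * l y.1 y.2) = cc r n l :=
  Nat.div_mul_cancel (cc_dvd r n l y)

lemma weight_single (w : Idx r n → ℕ) (y : Idx r n) (k : ℕ) :
    (Finsupp.weight w) (Finsupp.single y k) = k * w y := by
  simp [Finsupp.weight_apply, Finsupp.sum_single_index]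

lemma row_sum (hn : ∀ i, 0 < n i) (hl : ∀ i j, 0 < l i j) (i : Fin (r+1)) :
    ∑ j : Fin (n i), l i j * ww r n l ⟨i, j⟩ = cc r n l := by
  have hterm : ∀ j : Fin (n i), n i * (l i j * ww r n l ⟨i, j⟩) = cc r n l := by
    intro j
    have h1 := ww_mul r n l ⟨i, j⟩
    calc n i * (l i j * ww r n l ⟨i, j⟩)
        = ww r n l ⟨i, j⟩ * (n i * l i j) := by ring
      _ = cc r n l := h1
  have j0 : Fin (n i) := ⟨0, hn i⟩
  have hconst : ∀ j : Fin (n i), l i j * ww r n l ⟨i, j⟩ = l i j0 * ww r n l ⟨i, j0⟩ := by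
    intro j
    have h1 := hterm j
    have h2 := hterm j0
    exact Nat.eq_of_mul_eq_mul_left (hn i) (h1.trans h2.symm)
  rw [Finset.sum_congr rfl (fun j _ => hconst j)]
  rw [Finset.sum_const, Finset.card_univ, Fintype.card_fin, smul_eq_mul]
  rw [hterm j0]

lemma mono_hom (hn : ∀ i, 0 < n i) (hl : ∀ i j, 0 < l i j) (i : Fin (r+1)) :
    IsWeightedHomogeneous (ww r n l) (mono 𝕂 r n l i) (cc r n l) := by
  have hfac : ∀ j ∈ (Finset.univ : Finset (Fin (n i))),
      IsWeightedHomogeneous (ww r n l) ((X ⟨i, j⟩ : MvPolynomial (Idx r n) 𝕂) ^ l i j)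
        (l i j * ww r n l ⟨i, j⟩) := by
    intro j _
    rw [X_pow_eq_monomial]
    exact isWeightedHomogeneous_monomial _ _ _ (weight_single r n _ _ _)
  have h := IsWeightedHomogeneous.prod Finset.univ
    (fun j : Fin (n i) => (X ⟨i, j⟩ : MvPolynomial (Idx r n) 𝕂) ^ l i j)
    (fun j => l i j * ww r n l ⟨i, j⟩) hfac
  rw [row_sum r n l hn hl i] at h
  exact h

lemma gPoly_hom (hn : ∀ i, 0 < n i) (hl : ∀ i j, 0 < l i j) (i j k : Fin (r+1)) :
    IsWeightedHomogeneous (ww r n l) (gPoly 𝕂 r a n l i j k) (cc r n l) := by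
  have hC : ∀ (α : 𝕂) (i' : Fin (r+1)),
      IsWeightedHomogeneous (ww r n l) (C α * mono 𝕂 r n l i') (cc r n l) := by
    intro α i'
    have h := (isWeightedHomogeneous_C (ww r n l) α).mul (mono_hom 𝕂 r n l hn hl i')
    rwa [zero_add] at h
  exact ((hC _ i).add (hC _ j)).add (hC _ k)

lemma relIdeal_comp (hn : ∀ i, 0 < n i) (hl : ∀ i j, 0 < l i j) :
    ∀ p ∈ relIdeal 𝕂 r a n l, ∀ d : ℕ,
      weightedHomogeneousComponent (ww r n l) d p ∈ relIdeal 𝕂 r a n l := by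
  intro p hp
  refine Submodule.span_induction
    (p := fun q _ => ∀ d : ℕ,
      weightedHomogeneousComponent (ww r n l) d q ∈ relIdeal 𝕂 r a n l)
    ?_ ?_ ?_ ?_ hp
  · rintro q ⟨i, j, k, h1, h2, rfl⟩ d
    by_cases hd : d = cc r n l
    · subst hd
      rw [(gPoly_hom 𝕂 r a n l hn hl i j k).weightedHomogeneousComponent_same]
      exact Ideal.subset_span ⟨i, j, k, h1, h2, rfl⟩
    · rw [(gPoly_hom 𝕂 r a n l hn hl i j k).weightedHomogeneousComponent_ne d hd]
      exact Submodule.zero_mem _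
  · intro d
    rw [map_zero]
    exact Submodule.zero_mem _
  · intro p' q' _ _ hp' hq' d
    rw [map_add]
    exact Submodule.add_mem _ (hp' d) (hq' d)
  · intro f p' _ hp' d
    rw [smul_eq_mul, wHC_mul]
    exact Submodule.sum_mem _ (fun z _ => Ideal.mul_mem_left _ _ (hp' z.2))

lemma relIdeal_supp (hn : ∀ i, 0 < n i) (hl : ∀ i j, 0 < l i j) :
    ∀ p ∈ relIdeal 𝕂 r a n l, ∀ m ∈ p.support,
      cc r n l ≤ (Finsupp.weight (ww r n l)) m := by
  classical
  intro p hp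
  refine Submodule.span_induction
    (p := fun q _ => ∀ m ∈ q.support, cc r n l ≤ (Finsupp.weight (ww r n l)) m)
    ?_ ?_ ?_ ?_ hp
  · rintro q ⟨i, j, k, h1, h2, rfl⟩ m hm
    rw [(gPoly_hom 𝕂 r a n l hn hl i j k) (mem_support_iff.mp hm)]
  · intro m hm
    simp at hm
  · intro p' q' _ _ hp' hq' m hm
    rcases Finset.mem_union.mp (support_add hm) with h | h
    · exact hp' m h
    · exact hq' m h
  · intro f p' _ hp' m hm
    rw [smul_eq_mul] at hm
    obtain ⟨m1, hm1, m2, hm2, rfl⟩ := Finset.mem_add.mp (support_mul _ _ hm)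
    rw [map_add]
    exact le_trans (hp' m2 hm2) (Nat.le_add_left _ _)

end App

end S11Aux

section Statement11

/-- If `R(A,𝔫,L)` is a unique factorization domain (an integral domain in which every
nonzero nonunit is a product of primes) and `n_i l_{ij} > 1` holds for a given pair
`(i,j)`, then the class of `T_{ij}` is a prime element of `R(A,𝔫,L)`. -/
theorem statement11 (𝕂 : Type) [Field 𝕂] [IsAlgClosed 𝕂] [CharZero 𝕂]
    (r : ℕ) (hr : 1 ≤ r) (a : Fin (r+1) → 𝕂 × 𝕂)
    (ha : ∀ i k : Fin (r+1), i ≠ k → LinearIndependent 𝕂 ![a i, a k])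
    (n : Fin (r+1) → ℕ) (hn : ∀ i, 0 < n i)
    (l : ∀ i : Fin (r+1), Fin (n i) → ℕ) (hl : ∀ i j, 0 < l i j)
    (hUFD : IsDomain (RAnL 𝕂 r a n l) ∧
      ∀ f : RAnL 𝕂 r a n l, f ≠ 0 → ¬ IsUnit f →
        ∃ ms : Multiset (RAnL 𝕂 r a n l), (∀ p ∈ ms, Prime p) ∧ ms.prod = f)
    (x : Idx r n) (hx : 1 < n x.1 * l x.1 x.2) :
    Prime (Ideal.Quotient.mk (relIdeal 𝕂 r a n l) (X x)) := by
  classical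
  obtain ⟨hdom, hfact⟩ := hUFD
  haveI := hdom
  have hKpos : 0 < n x.1 * l x.1 x.2 := lt_trans Nat.zero_lt_one hx
  have hwc := S11Aux.ww_mul r n l x
  have hcpos := S11Aux.cc_pos r n l hn hl
  have hwpos : 0 < S11Aux.ww r n l x := by
    rcases Nat.eq_zero_or_pos (S11Aux.ww r n l x) with h | h
    · rw [h, zero_mul] at hwc
      omega
    · exact h
  have hlt : S11Aux.ww r n l x < S11Aux.cc r n l := by
    calc S11Aux.ww r n l x = S11Aux.ww r n l x * 1 := (mul_one _).symm
      _ < S11Aux.ww r n l x * (n x.1 * l x.1 x.2) := by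
          exact mul_lt_mul_of_pos_left hx hwpos
      _ = S11Aux.cc r n l := hwc
  obtain ⟨h0, hirr⟩ := S11Aux.irred_aux (S11Aux.ww r n l) (S11Aux.cc r n l)
    (relIdeal 𝕂 r a n l) hdom
    (S11Aux.relIdeal_comp 𝕂 r a n l hn hl)
    (S11Aux.relIdeal_supp 𝕂 r a n l hn hl) x hlt
  obtain ⟨ms, hms, hprod⟩ := hfact _ h0 hirr.not_isUnit
  by_cases hne : ms = 0
  · subst hne
    rw [Multiset.prod_zero] at hprod
    exact absurd (hprod ▸ isUnit_one) hirr.not_isUnit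
  · obtain ⟨p, hpmem⟩ := Multiset.exists_mem_of_ne_zero hne
    obtain ⟨s, rfl⟩ := Multiset.exists_cons_of_mem hpmem
    rw [Multiset.prod_cons] at hprod
    have hprime := hms p (Multiset.mem_cons_self _ _)
    rcases hirr.isUnit_or_isUnit hprod.symm with hup | hus
    · exact absurd hup hprime.not_isUnit
    · have hassoc : Associated p (Ideal.Quotient.mk (relIdeal 𝕂 r a n l) (X x)) :=
        ⟨hus.unit, by rw [IsUnit.unit_spec]; exact hprod⟩
      exact hassoc.prime hprime

end Statement11
end
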